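/- For cotransverse f : {0,1}^n → {0,1}^n, define T(f) : [0,1]^n → [0,1]^n by T(f)ᵢ(x) = max over ε ∈ fᵢ⁻¹(1) of min{x_k : ε_k = 1}, where fᵢ is the i-th component of f. Then T(f) restricted to {0,1}^n equals f, and T(g∘f) = T(g)∘T(f) for cotransverse f,g, i.e., T is functorial. -/

import Mathlib

open scoped ENNReal

open Classical in
noncomputable def dCube {n : ℕ} (x y : Fin n → Bool) : ℝ≥0∞ :=
  if x ≤ y then ((Finset.univ.filter fun i => x i ≠ y i).card : ℝ≥0∞) else ⊤

/-- Maps between binary cubes. -/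
abbrev CubeMap (m n : ℕ) := (Fin m → Bool) → (Fin n → Bool)

/-- Cotransverse maps: strictly increasing poset maps preserving `d̄₁`-distance `1`. -/
def Cotransverse {m n : ℕ} (f : CubeMap m n) : Prop :=
  StrictMono f ∧ ∀ x y, dCube x y = 1 → dCube (f x) (f y) = 1

/-- Membership in the box category `□`: composites of coface maps. -/
inductive IsBox : ∀ {m n : ℕ}, CubeMap m n → Prop
  | id (n : ℕ) : IsBox (@id (Fin n → Bool))
  | coface {n : ℕ} (i : Fin (n + 1)) (a : Bool) :
      IsBox (fun x : Fin n → Bool => (i.insertNth a x : Fin (n + 1) → Bool))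
  | comp {m n p : ℕ} {f : CubeMap m n} {g : CubeMap n p} :
      IsBox f → IsBox g → IsBox (g ∘ f)

open Classical in
/-- The topological extension `T(f) : [0,1]^n → [0,1]^n` of a cotransverse endomap,
defined by `T(f)ᵢ(x) = max over ε ∈ fᵢ⁻¹(1) of min { x_k : ε_k = 1 }`. -/
noncomputable def Tmap {n : ℕ} (f : CubeMap n n)
    (x : Fin n → unitInterval) : Fin n → unitInterval :=
  fun i =>
    (Finset.univ.filter fun ε : Fin n → Bool => f ε i = true).sup
      (fun ε => (Finset.univ.filter fun k => ε k = true).inf (fun k => x k))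

/-- The inclusion `{0,1} ⊆ [0,1]`. -/
def boolToI (b : Bool) : unitInterval := if b then 1 else 0

lemma inf_le_Tmap {n : ℕ} (f : CubeMap n n) (x : Fin n → unitInterval)
    {ε : Fin n → Bool} {j : Fin n} (h : f ε j = true) :
    (Finset.univ.filter fun k => ε k = true).inf (fun k => x k) ≤ Tmap f x j := by
  simp only [Tmap, Finset.filter_congr_decidable]
  exact Finset.le_sup
    (f := fun ε : Fin n → Bool => (Finset.univ.filter fun k => ε k = true).inf (fun k => x k))
    (Finset.mem_filter.mpr ⟨Finset.mem_univ ε, h⟩)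

lemma Tmap_le {n : ℕ} (f : CubeMap n n) (x : Fin n → unitInterval) {j : Fin n}
    {c : unitInterval}
    (h : ∀ ε : Fin n → Bool, f ε j = true →
      (Finset.univ.filter fun k => ε k = true).inf (fun k => x k) ≤ c) :
    Tmap f x j ≤ c := by
  simp only [Tmap, Finset.filter_congr_decidable]
  refine Finset.sup_le fun ε hε => ?_
  rw [Finset.mem_filter] at hε
  exact h ε hε.2

lemma cotr_mono {m n : ℕ} {f : CubeMap m n} (hf : Cotransverse f) : Monotone f := by
  intro x y h
  rcases eq_or_lt_of_le h with rfl | h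
  · exact le_rfl
  · exact (hf.1 h).le

/-- `T(f)` restricted to the binary cube equals `f`, and `T` is functorial:
`T(g ∘ f) = T(g) ∘ T(f)` for cotransverse `f`, `g`. -/
theorem stmt18 {n : ℕ} (f g : CubeMap n n)
    (hf : Cotransverse f) (hg : Cotransverse g) :
    (∀ x : Fin n → Bool, Tmap f (fun k => boolToI (x k)) = fun i => boolToI (f x i)) ∧
    Tmap (g ∘ f) = Tmap g ∘ Tmap f := by
  constructor
  · intro x
    funext i
    simp only [Tmap, Finset.filter_congr_decidable]
    cases hfx : f x i with
    | true =>
      apply le_antisymm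
      · refine Finset.sup_le fun ε _ => ?_
        show _ ≤ boolToI true
        simpa [boolToI] using unitInterval.le_one'
      · refine le_trans ?_ (Finset.le_sup (Finset.mem_filter.mpr ⟨Finset.mem_univ x, hfx⟩))
        refine Finset.le_inf fun k hk => ?_
        rw [Finset.mem_filter] at hk
        simp [boolToI, hk.2]
    | false =>
      apply le_antisymm
      · refine Finset.sup_le fun ε hε => ?_
        rw [Finset.mem_filter] at hε
        have hnle : ¬ ε ≤ x := by
          intro hle
          have := cotr_mono hf hle i
          rw [hε.2, hfx] at this
          exact absurd this (by simp)
        obtain ⟨k, hk⟩ := not_forall.mp hnle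
        have hek : ε k = true := by
          cases h : ε k
          · exact absurd (by simp [h]) hk
          · rfl
        have hxk : x k = false := by
          cases h : x k
          · rfl
          · exact absurd (by simp [h]) hk
        refine le_trans (Finset.inf_le (Finset.mem_filter.mpr ⟨Finset.mem_univ k, hek⟩)) ?_
        simp [boolToI, hxk]
      · simp [boolToI]
  · funext x i
    show Tmap (g ∘ f) x i = Tmap g (Tmap f x) i
    apply le_antisymm
    · refine Tmap_le _ _ fun ε hε => ?_
      have hε' : g (f ε) i = true := hε
      refine le_trans ?_ (inf_le_Tmap g (Tmap f x) hε')
      refine Finset.le_inf fun j hj => ?_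
      rw [Finset.mem_filter] at hj
      exact inf_le_Tmap f x hj.2
    · refine Tmap_le _ _ fun δ hδ => ?_
      by_cases hbot : ∃ j, δ j = true ∧ (Finset.univ.filter fun ε => f ε j = true) = ∅
      · obtain ⟨j, hj, hempty⟩ := hbot
        refine le_trans (Finset.inf_le (Finset.mem_filter.mpr ⟨Finset.mem_univ j, hj⟩)) ?_
        have : Tmap f x j = ⊥ := by
          simp only [Tmap, Finset.filter_congr_decidable]
          rw [show (Finset.univ.filter fun ε : Fin n → Bool => f ε j = true) = ∅ from hempty]
          simp
        rw [this]
        exact bot_le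
      · push_neg at hbot
        have hex : ∀ j, δ j = true → ∃ ε, f ε j = true ∧
            Tmap f x j = (Finset.univ.filter fun k => ε k = true).inf (fun k => x k) := by
          intro j hj
          obtain ⟨ε, hmem, heq⟩ := Finset.exists_mem_eq_sup _
            (hbot j hj)
            (fun ε : Fin n → Bool => (Finset.univ.filter fun k => ε k = true).inf (fun k => x k))
          rw [Finset.mem_filter] at hmem
          exact ⟨ε, hmem.2, heq⟩
        choose E hE1 hE2 using hex
        classical
        set ε : Fin n → Bool := fun k => decide (∃ j, ∃ h : δ j = true, E j h k = true)
          with hεdef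
        have hεle : ∀ j (h : δ j = true), E j h ≤ ε := by
          intro j h k
          cases hk : E j h k
          · exact Bool.false_le _
          · have : ε k = true := by
              rw [hεdef]
              exact decide_eq_true ⟨j, h, hk⟩
            rw [this]
        have hδfε : δ ≤ f ε := by
          intro j
          cases hj : δ j
          · exact Bool.false_le _
          · have := cotr_mono hf (hεle j hj) j
            rw [hE1 j hj] at this
            exact this
        have hgfε : g (f ε) i = true := by
          have := cotr_mono hg hδfε i
          rw [hδ] at this
          exact Bool.eq_true_of_true_le this
        have hgfε' : (g ∘ f) ε i = true := hgfε
        refine le_trans ?_ (inf_le_Tmap (g ∘ f) x hgfε')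
        refine Finset.le_inf fun k hk => ?_
        rw [Finset.mem_filter] at hk
        obtain ⟨j, hj, hEk⟩ : ∃ j, ∃ h : δ j = true, E j h k = true := of_decide_eq_true hk.2
        refine le_trans (Finset.inf_le (Finset.mem_filter.mpr ⟨Finset.mem_univ j, hj⟩)) ?_
        rw [hE2 j hj]
        exact Finset.inf_le (Finset.mem_filter.mpr ⟨Finset.mem_univ k, hEk⟩)
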